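/- Let F be a finite bipartite graph with parts A and B and t ≥ 4 edges, and let r ≥ 1 be a real number. Then at least one of the following holds: (1) there exists a subset S ⊆ A such that every vertex of S has degree at least √(r·t)/2 in F and the number of edges of F incident to S is at least t/(36·(log₂ t)²); (2) there exists a subset S ⊆ B with the same two properties; (3) F has a subgraph with at least t/(36·(log₂ t)²) edges whose maximum degree is at most √(r·t). -/

import Mathlib

open Classical in
/-- Degree-class decomposition of a bipartite graph `F` with parts `A`, `B` and
`t ≥ 4` edges: either some side has a subset `S` of vertices of degree at least
`√(rt)/2` incident to at least `t/(36 (log₂ t)²)` edges, or `F` has a subgraph with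
at least `t/(36 (log₂ t)²)` edges and maximum degree at most `√(rt)`. -/
theorem stmt18 {X : Type*} [Fintype X] [DecidableEq X] (F : SimpleGraph X)
    [DecidableRel F.Adj]
    (A B : Finset X) (hdisj : Disjoint A B) (hcover : A ∪ B = Finset.univ)
    (hbip : ∀ u v, F.Adj u v → (u ∈ A ∧ v ∈ B) ∨ (u ∈ B ∧ v ∈ A))
    (t : ℕ) (ht : t = F.edgeFinset.card) (ht4 : 4 ≤ t)
    (r : ℝ) (hr : 1 ≤ r) :
    (∃ S ⊆ A, (∀ v ∈ S, Real.sqrt (r * t) / 2 ≤ (F.degree v : ℝ)) ∧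
        (t : ℝ) / (36 * (Real.logb 2 t) ^ 2) ≤
          ((F.edgeFinset.filter (fun e => ∃ v ∈ S, v ∈ e)).card : ℝ)) ∨
    (∃ S ⊆ B, (∀ v ∈ S, Real.sqrt (r * t) / 2 ≤ (F.degree v : ℝ)) ∧
        (t : ℝ) / (36 * (Real.logb 2 t) ^ 2) ≤
          ((F.edgeFinset.filter (fun e => ∃ v ∈ S, v ∈ e)).card : ℝ)) ∨
    (∃ F' : SimpleGraph X, F' ≤ F ∧
        (t : ℝ) / (36 * (Real.logb 2 t) ^ 2) ≤ (F'.edgeSet.ncard : ℝ) ∧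
        ∀ v, ((F'.neighborSet v).ncard : ℝ) ≤ Real.sqrt (r * t)) := by

  classical
  set D : ℝ := Real.sqrt (r * t) with hD
  have hD0 : 0 ≤ D := Real.sqrt_nonneg _
  set SA : Finset X := A.filter (fun v => D / 2 ≤ (F.degree v : ℝ)) with hSA
  set SB : Finset X := B.filter (fun v => D / 2 ≤ (F.degree v : ℝ)) with hSB
  set b : ℝ := (t : ℝ) / (36 * (Real.logb 2 t) ^ 2) with hb
  by_cases hA : b ≤ ((F.edgeFinset.filter (fun e => ∃ v ∈ SA, v ∈ e)).card : ℝ)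
  · exact Or.inl ⟨SA, Finset.filter_subset _ _,
      fun v hv => (Finset.mem_filter.mp hv).2, hA⟩
  by_cases hB : b ≤ ((F.edgeFinset.filter (fun e => ∃ v ∈ SB, v ∈ e)).card : ℝ)
  · exact Or.inr (Or.inl ⟨SB, Finset.filter_subset _ _,
      fun v hv => (Finset.mem_filter.mp hv).2, hB⟩)
  push_neg at hA hB
  refine Or.inr (Or.inr ?_)
  set F' : SimpleGraph X :=
    { Adj := fun u v => F.Adj u v ∧ (F.degree u : ℝ) < D / 2 ∧ (F.degree v : ℝ) < D / 2
      symm := ⟨fun u v h => ⟨h.1.symm, h.2.2, h.2.1⟩⟩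
      loopless := ⟨fun u h => F.loopless.irrefl u h.1⟩ } with hF'
  haveI : DecidableRel F'.Adj := Classical.decRel _
  have hle : F' ≤ F := fun u v h => h.1
  refine ⟨F', hle, ?_, ?_⟩
  · -- edge count
    have hEcard : (F'.edgeSet.ncard : ℝ) = (F'.edgeFinset.card : ℝ) := by
      rw [Set.ncard_eq_toFinset_card' F'.edgeSet]
      exact congrArg (fun n : ℕ => (n : ℝ)) (congrArg Finset.card (Set.toFinset_congr rfl))
    have hsub : F.edgeFinset ⊆ F'.edgeFinset ∪
        (F.edgeFinset.filter (fun e => ∃ v ∈ SA, v ∈ e)) ∪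
        (F.edgeFinset.filter (fun e => ∃ v ∈ SB, v ∈ e)) := by
      intro e he
      induction e using Sym2.ind with
      | _ u v =>
        have hadj : F.Adj u v := by
          rwa [SimpleGraph.mem_edgeFinset, SimpleGraph.mem_edgeSet] at he
        have hmem : ∀ w : X, D / 2 ≤ (F.degree w : ℝ) → w ∈ s(u, v) →
            s(u, v) ∈ (F.edgeFinset.filter (fun e => ∃ v ∈ SA, v ∈ e)) ∪
              (F.edgeFinset.filter (fun e => ∃ v ∈ SB, v ∈ e)) := by
          intro w hw hwm
          have hAB : w ∈ A ∨ w ∈ B := by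
            have : w ∈ A ∪ B := by rw [hcover]; exact Finset.mem_univ w
            exact Finset.mem_union.mp this
          rcases hAB with h | h
          · exact Finset.mem_union_left _ (Finset.mem_filter.mpr
              ⟨he, w, Finset.mem_filter.mpr ⟨h, hw⟩, hwm⟩)
          · exact Finset.mem_union_right _ (Finset.mem_filter.mpr
              ⟨he, w, Finset.mem_filter.mpr ⟨h, hw⟩, hwm⟩)
        by_cases hu : (F.degree u : ℝ) < D / 2
        · by_cases hv : (F.degree v : ℝ) < D / 2
          · refine Finset.mem_union_left _ (Finset.mem_union_left _ ?_)
            rw [SimpleGraph.mem_edgeFinset, SimpleGraph.mem_edgeSet]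
            exact ⟨hadj, hu, hv⟩
          · have := hmem v (le_of_not_gt hv) (Sym2.mem_mk_right u v)
            rw [Finset.union_assoc]
            exact Finset.mem_union_right _ this
        · have := hmem u (le_of_not_gt hu) (Sym2.mem_mk_left u v)
          rw [Finset.union_assoc]
          exact Finset.mem_union_right _ this
    have hcard : (t : ℝ) ≤ (F'.edgeFinset.card : ℝ)
        + ((F.edgeFinset.filter (fun e => ∃ v ∈ SA, v ∈ e)).card : ℝ)
        + ((F.edgeFinset.filter (fun e => ∃ v ∈ SB, v ∈ e)).card : ℝ) := by
      have h1 : F.edgeFinset.card ≤ F'.edgeFinset.card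
          + (F.edgeFinset.filter (fun e => ∃ v ∈ SA, v ∈ e)).card
          + (F.edgeFinset.filter (fun e => ∃ v ∈ SB, v ∈ e)).card := by
        calc F.edgeFinset.card ≤ _ := Finset.card_le_card hsub
          _ ≤ _ := Finset.card_union_le _ _
          _ ≤ _ := by
            exact Nat.add_le_add_right (Finset.card_union_le _ _) _
      have : ((F.edgeFinset.card : ℕ) : ℝ) ≤ _ := Nat.cast_le.mpr h1
      push_cast at this
      rw [ht]
      push_cast
      linarith
    have hL : (2 : ℝ) ≤ Real.logb 2 t := by
      have h4 : (4 : ℝ) ≤ (t : ℝ) := by exact_mod_cast ht4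
      have hmono : Real.logb 2 4 ≤ Real.logb 2 t :=
        Real.logb_le_logb_of_le (b := 2) (x := 4) (by norm_num) (by norm_num) h4
      have h24 : Real.logb 2 4 = 2 := by
        rw [show (4 : ℝ) = (2 : ℝ) ^ (2 : ℝ) by norm_num [Real.rpow_natCast, Real.rpow_two]]
        exact Real.logb_rpow (by norm_num) (by norm_num)
      linarith
    have hLpos : (3 : ℝ) ≤ 36 * (Real.logb 2 t) ^ 2 := by nlinarith
    have htpos : (0 : ℝ) < t := by positivity
    have h3b : 3 * b ≤ (t : ℝ) := by
      rw [hb, mul_div_assoc', div_le_iff₀ (by nlinarith)]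
      nlinarith
    rw [hEcard]
    linarith
  · -- degree bound
    intro v
    by_cases hv : (F.degree v : ℝ) < D / 2
    · have hsub : F'.neighborSet v ⊆ F.neighborSet v := fun u h => h.1
      have h1 : (F'.neighborSet v).ncard ≤ (F.neighborSet v).ncard :=
        Set.ncard_le_ncard hsub (Set.toFinite _)
      have h2 : (F.neighborSet v).ncard = F.degree v := by
        rw [Set.ncard_eq_toFinset_card' (F.neighborSet v), SimpleGraph.degree,
          SimpleGraph.neighborFinset_def]
      have : ((F'.neighborSet v).ncard : ℝ) ≤ ((F.neighborSet v).ncard : ℝ) :=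
        Nat.cast_le.mpr h1
      rw [h2] at this
      linarith
    · have : F'.neighborSet v = ∅ := by
        ext u
        simp only [SimpleGraph.mem_neighborSet, Set.mem_empty_iff_false, iff_false]
        intro h
        exact hv h.2.1
      rw [this]
      simp [hD0]
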